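/- Let λ/μ be a connected skew diagram with r nonempty rows (a row i is nonempty if (i,j) ∈ λ/μ for some j). Then #{(i,j) ∈ λ/μ : (i+1,j) ∈ λ/μ} = #{(i,j) ∈ λ/μ : (i+1,j+1) ∈ λ/μ} + r − 1. -/

import Mathlib

open scoped Classical

abbrev Cell := ℤ × ℤ

def IsPartitionList (l : List ℕ) : Prop := l.Pairwise (· ≥ ·) ∧ ∀ x ∈ l, 0 < x

noncomputable def skewCells (lam mu : List ℕ) : Finset Cell :=
  (Finset.Icc (1 : ℤ) (lam.length : ℤ) ×ˢ Finset.Icc (1 : ℤ) ((lam.foldr max 0 : ℕ) : ℤ)).filter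
    (fun c => ((mu.getD ((c.1 - 1).toNat) 0 : ℕ) : ℤ) < c.2 ∧
              c.2 ≤ ((lam.getD ((c.1 - 1).toNat) 0 : ℕ) : ℤ))

/-- Two cells are adjacent if they differ by (0,±1) or (±1,0). -/
def CellAdj (c c' : Cell) : Prop :=
  (c.1 = c'.1 ∧ (c.2 = c'.2 + 1 ∨ c.2 + 1 = c'.2)) ∨
  (c.2 = c'.2 ∧ (c.1 = c'.1 + 1 ∨ c.1 + 1 = c'.1))

/-- A diagram is connected if it is nonempty and any two of its cells are joined by a
path of pairwise-adjacent cells of the diagram. -/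
def IsConnectedDiagram (D : Finset Cell) : Prop :=
  D.Nonempty ∧ ∀ c ∈ D, ∀ c' ∈ D,
    Relation.ReflTransGen (fun a b => b ∈ D ∧ CellAdj a b) c c'

def rowL (l : List ℕ) (i : ℤ) : ℤ := (l.getD ((i - 1).toNat) 0 : ℕ)

lemma le_foldr_max {l : List ℕ} {a : ℕ} (h : a ∈ l) : a ≤ l.foldr max 0 := by
  induction l with
  | nil => simp at h
  | cons b t ih =>
    rcases List.mem_cons.1 h with rfl | h
    · exact le_max_left _ _
    · exact le_trans (ih h) (le_max_right _ _)

lemma rowL_nonneg (l : List ℕ) (i : ℤ) : 0 ≤ rowL l i := Int.natCast_nonneg _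

lemma rowL_eq_zero {l : List ℕ} {i : ℤ} (h : (l.length : ℤ) < i) : rowL l i = 0 := by
  unfold rowL
  rw [List.getD_eq_default _ _ (by omega)]
  simp

lemma rowL_anti {l : List ℕ} (hl : l.Pairwise (· ≥ ·)) {i : ℤ} (hi : 1 ≤ i) :
    rowL l (i + 1) ≤ rowL l i := by
  unfold rowL
  have h1 : (i + 1 - 1).toNat = (i - 1).toNat + 1 := by omega
  rw [h1]
  set k := (i - 1).toNat
  by_cases h : k + 1 < l.length
  · rw [List.getD_eq_getElem _ _ h, List.getD_eq_getElem _ _ (by omega)]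
    exact_mod_cast List.pairwise_iff_getElem.1 hl k (k + 1) (by omega) h (by omega)
  · rw [List.getD_eq_default _ _ (by omega)]
    simp

lemma mem_skew {lam mu : List ℕ} {c : Cell} :
    c ∈ skewCells lam mu ↔
      1 ≤ c.1 ∧ c.1 ≤ (lam.length : ℤ) ∧ rowL mu c.1 < c.2 ∧ c.2 ≤ rowL lam c.1 := by
  unfold skewCells rowL
  simp only [Finset.mem_filter, Finset.mem_product, Finset.mem_Icc]
  constructor
  · rintro ⟨⟨⟨h1, h2⟩, _, _⟩, h5, h6⟩
    exact ⟨h1, h2, h5, h6⟩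
  · rintro ⟨h1, h2, h5, h6⟩
    have hmu0 : (0:ℤ) ≤ (mu.getD ((c.1 - 1).toNat) 0 : ℤ) := Int.natCast_nonneg _
    have hk : (c.1 - 1).toNat < lam.length := by omega
    have hmem : lam.getD ((c.1 - 1).toNat) 0 ∈ lam := by
      rw [List.getD_eq_getElem _ _ hk]
      exact List.getElem_mem hk
    have hle := le_foldr_max hmem
    exact ⟨⟨⟨h1, h2⟩, by omega, by exact_mod_cast le_trans h6 (by exact_mod_cast hle)⟩, h5, h6⟩

/-- For a connected skew diagram λ/μ with r nonempty rows, the number of cells with a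
cell directly below equals the number of cells with a cell diagonally southeast,
plus r − 1. -/
theorem up_body_card (lam mu : List ℕ)
    (hlam : IsPartitionList lam) (hmu : IsPartitionList mu)
    (hml : ∀ i, mu.getD i 0 ≤ lam.getD i 0)
    (hconn : IsConnectedDiagram (skewCells lam mu)) :
    (((skewCells lam mu).filter
        (fun c => ((c.1 + 1, c.2) : Cell) ∈ skewCells lam mu)).card : ℤ) =
      (((skewCells lam mu).filter
        (fun c => ((c.1 + 1, c.2 + 1) : Cell) ∈ skewCells lam mu)).card : ℤ) +
        (((skewCells lam mu).image Prod.fst).card : ℤ) - 1 := by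
  classical
  set D := skewCells lam mu with hDdef
  set below := D.filter (fun c => ((c.1 + 1, c.2) : Cell) ∈ D) with hbelow
  set diag := D.filter (fun c => ((c.1 + 1, c.2 + 1) : Cell) ∈ D) with hdiag
  set R := D.image Prod.fst with hRdef
  have hDne : D.Nonempty := hconn.1
  have hRne : R.Nonempty := hDne.image _
  set m := R.max' hRne with hm
  have hmmem : m ∈ R := R.max'_mem hRne
  obtain ⟨b, hb, hbm⟩ := Finset.mem_image.1 hmmem
  -- connectivity consequence
  have key : ∀ i : ℤ, i ∈ R → i < m → rowL mu i < rowL lam (i + 1) := by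
    intro i hiR him
    by_contra hcon
    push_neg at hcon
    obtain ⟨a, ha, hai⟩ := Finset.mem_image.1 hiR
    have hpath := hconn.2 a ha b hb
    have stay : ∀ x : Cell,
        Relation.ReflTransGen (fun a b => b ∈ D ∧ CellAdj a b) a x → x ∈ D ∧ x.1 ≤ i := by
      intro x hx
      induction hx with
      | refl => exact ⟨ha, le_of_eq hai⟩
      | @tail y z _ hstep ih =>
        obtain ⟨hzD, hadj⟩ := hstep
        obtain ⟨hyD, hyi⟩ := ih
        refine ⟨hzD, ?_⟩
        rcases hadj with ⟨heq, _⟩ | ⟨hcol, hrow⟩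
        · omega
        · rcases hrow with h1 | h2
          · omega
          · by_cases hyi' : y.1 < i
            · omega
            · have hy1 : y.1 = i := le_antisymm hyi (not_lt.1 hyi')
              exfalso
              have hym := mem_skew.1 hyD
              have hzm := mem_skew.1 hzD
              rw [hy1] at hym
              rw [← h2, hy1] at hzm
              have := hzm.2.2.2
              have := hym.2.2.1
              omega
    have := (stay b hpath).2
    omega
  -- subset
  have hsub : diag ⊆ below := by
    intro c hc
    rw [hdiag, Finset.mem_filter] at hc
    obtain ⟨hcD, hq⟩ := hc
    rw [hbelow, Finset.mem_filter]
    refine ⟨hcD, ?_⟩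
    rw [hDdef, mem_skew] at hq ⊢
    have hcm := mem_skew.1 hcD
    have hmuanti : rowL mu (c.1 + 1) ≤ rowL mu c.1 := rowL_anti hmu.1 hcm.1
    simp only at hq ⊢
    refine ⟨hq.1, hq.2.1, by omega, by omega⟩
  have hcards : below.card = diag.card + (below \ diag).card := by
    have h1 := Finset.card_sdiff_of_subset hsub
    have h2 := Finset.card_le_card hsub
    omega
  set T := below \ diag with hT
  -- characterization of T
  have hTchar : ∀ c ∈ T, c ∈ D ∧ rowL mu c.1 < rowL lam (c.1 + 1) ∧ c.2 = rowL lam (c.1 + 1) := by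
    intro c hc
    rw [hT, Finset.mem_sdiff, hbelow, hdiag, Finset.mem_filter, Finset.mem_filter] at hc
    obtain ⟨⟨hcD, hp⟩, hnq⟩ := hc
    have hnq' : ¬(c ∈ D ∧ ((c.1 + 1, c.2 + 1) : Cell) ∈ D) := hnq
    rw [hDdef, mem_skew] at hp
    simp only at hp
    have hcm := mem_skew.1 hcD
    have hq : ¬ (((c.1 + 1, c.2 + 1) : Cell) ∈ D) := fun h => hnq' ⟨hcD, h⟩
    rw [hDdef, mem_skew] at hq
    push_neg at hq
    simp only at hq
    have h4 := hq hp.1 hp.2.1 (by omega)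
    exact ⟨hcD, by omega, by omega⟩
  have hinj : Set.InjOn Prod.fst (T : Set Cell) := by
    intro c hc c' hc' h
    have h1 := (hTchar c (by exact_mod_cast hc)).2.2
    have h2 := (hTchar c' (by exact_mod_cast hc')).2.2
    exact Prod.ext h (by rw [h1, h2, h])
  have hTimage : T.image Prod.fst = R.erase m := by
    ext i
    simp only [Finset.mem_image, Finset.mem_erase]
    constructor
    · rintro ⟨c, hc, rfl⟩
      obtain ⟨hcD, hlt, hcol⟩ := hTchar c hc
      have hiR : c.1 ∈ R := Finset.mem_image_of_mem _ hcD
      have hc2 : (c.1 + 1) ∈ R := by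
        have hcb : c ∈ below := (Finset.mem_sdiff.1 hc).1
        have hp := (Finset.mem_filter.1 hcb).2
        exact Finset.mem_image_of_mem Prod.fst hp
      have := R.le_max' _ hc2
      exact ⟨by omega, hiR⟩
    · rintro ⟨hne, hiR⟩
      have him : i < m := lt_of_le_of_ne (R.le_max' _ hiR) hne
      have hkey := key i hiR him
      obtain ⟨a, ha, hai⟩ := Finset.mem_image.1 hiR
      have ham := mem_skew.1 ha
      have hb1 : 1 ≤ i := by omega
      have hb2 : i ≤ (lam.length : ℤ) := by omega
      have hiℓ : i + 1 ≤ (lam.length : ℤ) := by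
        by_contra h
        have h0 : rowL lam (i + 1) = 0 := rowL_eq_zero (by omega)
        have := rowL_nonneg mu i
        omega
      have hmuanti : rowL mu (i + 1) ≤ rowL mu i := rowL_anti hmu.1 hb1
      have hlamanti : rowL lam (i + 1) ≤ rowL lam i := rowL_anti hlam.1 hb1
      refine ⟨(i, rowL lam (i + 1)), ?_, rfl⟩
      have hcD : ((i, rowL lam (i + 1)) : Cell) ∈ D := by
        rw [hDdef, mem_skew]; exact ⟨hb1, hb2, by simpa using hkey, by simpa using hlamanti⟩
      have hpD : ((i + 1, rowL lam (i + 1)) : Cell) ∈ D := by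
        rw [hDdef, mem_skew]
        exact ⟨by omega, by simpa using hiℓ, by simp only; omega, by simp only; exact le_refl _⟩
      have hqD : ¬ (((i + 1, rowL lam (i + 1) + 1) : Cell) ∈ D) := by
        rw [hDdef, mem_skew]
        push_neg
        intro _ _ _
        simp only
        omega
      rw [hT, Finset.mem_sdiff, hbelow, hdiag, Finset.mem_filter, Finset.mem_filter]
      exact ⟨⟨hcD, hpD⟩, fun h => hqD h.2⟩
  have hTcard : T.card = R.card - 1 := by
    have h1 : T.card = (T.image Prod.fst).card := (Finset.card_image_of_injOn hinj).symm
    rw [h1, hTimage, Finset.card_erase_of_mem hmmem]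
  have hR1 : 1 ≤ R.card := Finset.card_pos.2 hRne
  push_cast
  omega
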